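/- Truthful reporting of client schedules is weakly dominant: misreporting shrinks the admissible set and lowers joint profit pointwise. Precisely, A(f̂) ⊆ A(rc), and for every T ∈ A(f̂), (h T − f̂ T) · T ≤ (h T − rc T) · T; consequently V(f̂) ≤ V(rc), where V(f) := 0 if A(f) is empty and V(f) := max over T ∈ A(f) of (h T − f T) · T otherwise. Symmetrically, if a report ĝ : 𝒯 → ℝ satisfies ĝ T ≤ rc' T for all T ∈ 𝒯 (the borrower-side client rationality constraint, with rc' the borrower-side reservation schedule and the admissible set defined by (1/2) · (g T − f T) ≥ κ for the lender-side report f), then the corresponding admissible set and maximal joint profit under ĝ are weakly below those under rc'. -/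
import Mathlib


open Set Classical


lemma truthful_aux (grid : Finset ℝ) (hpos : ∀ T ∈ grid, (0:ℝ) ≤ T)
    (κ : ℝ) (hκ : 0 ≤ κ) (p q : ℝ → ℝ) (hpq : ∀ T ∈ grid, p T ≤ q T) :
    ({T | T ∈ grid ∧ κ ≤ (1 / 2) * p T} : Set ℝ) ⊆ {T | T ∈ grid ∧ κ ≤ (1 / 2) * q T} ∧
    (∀ T ∈ ({T | T ∈ grid ∧ κ ≤ (1 / 2) * p T} : Set ℝ), p T * T ≤ q T * T) ∧
    (if ({T | T ∈ grid ∧ κ ≤ (1 / 2) * p T} : Set ℝ).Nonempty then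
        sSup ((fun T => p T * T) '' {T | T ∈ grid ∧ κ ≤ (1 / 2) * p T})
      else 0) ≤
    (if ({T | T ∈ grid ∧ κ ≤ (1 / 2) * q T} : Set ℝ).Nonempty then
        sSup ((fun T => q T * T) '' {T | T ∈ grid ∧ κ ≤ (1 / 2) * q T})
      else 0) := by
  set Sp : Set ℝ := {T | T ∈ grid ∧ κ ≤ (1 / 2) * p T} with hSp
  set Sq : Set ℝ := {T | T ∈ grid ∧ κ ≤ (1 / 2) * q T} with hSq
  have hsub : Sp ⊆ Sq := by
    intro T hT
    exact ⟨hT.1, hT.2.trans (by nlinarith [hpq T hT.1])⟩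
  have hpt : ∀ T ∈ Sp, p T * T ≤ q T * T := fun T hT =>
    mul_le_mul_of_nonneg_right (hpq T hT.1) (hpos T hT.1)
  refine ⟨hsub, hpt, ?_⟩
  have hfinq : Sq.Finite := grid.finite_toSet.subset (fun T hT => hT.1)
  have hbdd : BddAbove ((fun T => q T * T) '' Sq) := ((hfinq.image _).bddAbove)
  have hnonneg : ∀ T ∈ Sq, 0 ≤ q T * T := by
    intro T hT
    have : 0 ≤ q T := by nlinarith [hT.2]
    exact mul_nonneg this (hpos T hT.1)
  by_cases hp : Sp.Nonempty
  · have hq : Sq.Nonempty := hp.mono hsub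
    simp only [hp, hq, if_pos]
    apply csSup_le (Set.Nonempty.image _ hp)
    rintro x ⟨T, hT, rfl⟩
    exact le_trans (hpt T hT) (le_csSup hbdd ⟨T, hsub hT, rfl⟩)
  · simp only [hp, if_neg, if_false]
    by_cases hq : Sq.Nonempty
    · simp only [hq, if_pos]
      obtain ⟨T0, hT0⟩ := hq
      exact le_trans (hnonneg T0 hT0) (le_csSup hbdd ⟨T0, hT0, rfl⟩)
    · simp [hq]


/-- The admissible (hurdle-feasible) set of volumes for a lender-side report `f`
against the counterparty schedule `h`. -/
def admissible (grid : Finset ℝ) (κ : ℝ) (h f : ℝ → ℝ) : Set ℝ :=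
  {T | T ∈ grid ∧ κ ≤ (1 / 2) * (h T - f T)}

/-- Maximal joint profit attainable under report `f`: `0` if the admissible set is
empty, otherwise the maximum of `(h T − f T) · T` over the admissible set. -/
noncomputable def maxProfit (grid : Finset ℝ) (κ : ℝ) (h f : ℝ → ℝ) : ℝ :=
  if (admissible grid κ h f).Nonempty then
    sSup ((fun T => (h T - f T) * T) '' admissible grid κ h f)
  else 0

/-- Truthful reporting of client schedules is weakly dominant: misreporting shrinks the
admissible set and lowers joint profit pointwise, hence lowers the maximal joint profit;
symmetrically on the borrower side. -/
theorem truthful_reporting_weakly_dominant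
    (grid : Finset ℝ) (hgrid : grid.Nonempty)
    (hpos : ∀ T ∈ grid, (0:ℝ) ≤ T)
    (κ : ℝ) (hκ : 0 ≤ κ)
    (h rc fhat : ℝ → ℝ)
    (hrat : ∀ T ∈ grid, rc T ≤ fhat T)
    (f rc' ghat : ℝ → ℝ)
    (hrat' : ∀ T ∈ grid, ghat T ≤ rc' T) :
    (admissible grid κ h fhat ⊆ admissible grid κ h rc ∧
      (∀ T ∈ admissible grid κ h fhat, (h T - fhat T) * T ≤ (h T - rc T) * T) ∧
      maxProfit grid κ h fhat ≤ maxProfit grid κ h rc) ∧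
    ({T | T ∈ grid ∧ κ ≤ (1 / 2) * (ghat T - f T)} ⊆
        {T | T ∈ grid ∧ κ ≤ (1 / 2) * (rc' T - f T)} ∧
      (∀ T ∈ {T | T ∈ grid ∧ κ ≤ (1 / 2) * (ghat T - f T)},
        (ghat T - f T) * T ≤ (rc' T - f T) * T) ∧
      (if ({T | T ∈ grid ∧ κ ≤ (1 / 2) * (ghat T - f T)} : Set ℝ).Nonempty then
          sSup ((fun T => (ghat T - f T) * T) ''
            {T | T ∈ grid ∧ κ ≤ (1 / 2) * (ghat T - f T)})
        else 0) ≤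
      (if ({T | T ∈ grid ∧ κ ≤ (1 / 2) * (rc' T - f T)} : Set ℝ).Nonempty then
          sSup ((fun T => (rc' T - f T) * T) ''
            {T | T ∈ grid ∧ κ ≤ (1 / 2) * (rc' T - f T)})
        else 0)) := by
  constructor
  · have := truthful_aux grid hpos κ hκ (fun T => h T - fhat T) (fun T => h T - rc T)
      (fun T hT => sub_le_sub_left (hrat T hT) _)
    exact this
  · exact truthful_aux grid hpos κ hκ (fun T => ghat T - f T) (fun T => rc' T - f T)
      (fun T hT => sub_le_sub_right (hrat' T hT) _)
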